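/- There is no twice differentiable function u : [0, ∞) → ℝ satisfying u''(r) = (3/4)(u(r)^{−1/3} − u(r)) for all r ≥ 0, with u(r) > 0 for all r ≥ 0, u'(0) > 0, and the zero-energy condition 3u(0)² + 4u'(0)² = 9u(0)^{2/3}. -/

import Mathlib

open Set

/-- A function with vanishing right derivative on `[0,∞)` is constant there. -/
lemma const_of_Ici_aux {f : ℝ → ℝ}
    (hf : ∀ r ∈ Set.Ici (0:ℝ), HasDerivWithinAt f 0 (Set.Ici 0) r) :
    ∀ r ∈ Set.Ici (0:ℝ), f r = f 0 := by
  intro r hr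
  refine constant_of_has_deriv_right_zero (a := 0) (b := r)
    (fun x hx => ((hf x hx.1).continuousWithinAt).mono Set.Icc_subset_Ici_self)
    (fun x hx => (hf x hx.1).mono (Set.Ici_subset_Ici.2 hx.1)) r ⟨hr, le_rfl⟩

lemma key_alg (a b c : ℝ) (ha : 0 < a)
    (hc : c = 3 / 4 * (a ^ (-(1:ℝ)/3) - a))
    (hb : 4 * b ^ 2 = 9 * a ^ ((2:ℝ)/3) - 3 * a ^ 2) :
    2/3 * ((-(1:ℝ)/3 * a ^ (-(1:ℝ)/3 - 1) * b) * b + a ^ (-(1:ℝ)/3) * c)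
      = -(1/3) * a ^ ((2:ℝ)/3) := by
  have hp0 : 0 < a ^ ((1:ℝ)/3) := Real.rpow_pos_of_pos ha _
  set p := a ^ ((1:ℝ)/3) with hp
  have h3 : p ^ (3:ℕ) = a := by
    rw [hp, ← Real.rpow_natCast (a ^ ((1:ℝ)/3)) 3, ← Real.rpow_mul ha.le]; norm_num
  have h2 : a ^ ((2:ℝ)/3) = p ^ (2:ℕ) := by
    rw [hp, ← Real.rpow_natCast (a ^ ((1:ℝ)/3)) 2, ← Real.rpow_mul ha.le]; norm_num
  have hm1 : a ^ (-(1:ℝ)/3) = p⁻¹ := by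
    rw [show -(1:ℝ)/3 = -((1:ℝ)/3) by ring, Real.rpow_neg ha.le, hp]
  have h4 : a ^ ((4:ℝ)/3) = p ^ (4:ℕ) := by
    rw [hp, ← Real.rpow_natCast (a ^ ((1:ℝ)/3)) 4, ← Real.rpow_mul ha.le]; norm_num
  have hm4 : a ^ (-(1:ℝ)/3 - 1) = (p ^ (4:ℕ))⁻¹ := by
    rw [show -(1:ℝ)/3 - 1 = -((4:ℝ)/3) by ring, Real.rpow_neg ha.le, h4]
  rw [h2, ← h3] at hb
  rw [hc, hm1, hm4, h2, ← h3]
  have hbb : b * b = (9 * p ^ (2:ℕ) - 3 * (p ^ (3:ℕ)) ^ 2) / 4 := by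
    have hsq : b * b = b ^ 2 := (sq b).symm
    linarith [hb]
  rw [show (-(1:ℝ)/3 * (p ^ (4:ℕ))⁻¹ * b) * b = -(1/3) * (p ^ (4:ℕ))⁻¹ * (b * b) by ring, hbb]
  field_simp
  ring

theorem stmt_8 :
    ¬ ∃ u u' u'' : ℝ → ℝ,
      (∀ r ∈ Set.Ici (0 : ℝ), HasDerivWithinAt u (u' r) (Set.Ici 0) r) ∧
      (∀ r ∈ Set.Ici (0 : ℝ), HasDerivWithinAt u' (u'' r) (Set.Ici 0) r) ∧
      (∀ r ∈ Set.Ici (0 : ℝ),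
        u'' r = (3 / 4) * ((u r) ^ (-(1 : ℝ) / 3) - u r)) ∧
      (∀ r ∈ Set.Ici (0 : ℝ), 0 < u r) ∧
      0 < u' 0 ∧
      3 * (u 0) ^ 2 + 4 * (u' 0) ^ 2 = 9 * (u 0) ^ ((2 : ℝ) / 3) := by
  rintro ⟨u, u', u'', hu, hu', hode, hpos, hu'0, hE0⟩
  -- Energy is conserved and zero
  set E : ℝ → ℝ := fun r => 3 * (u r) ^ 2 + 4 * (u' r) ^ 2 - 9 * (u r) ^ ((2:ℝ)/3) with hEdef
  have hEd : ∀ r ∈ Set.Ici (0:ℝ), HasDerivWithinAt E 0 (Set.Ici 0) r := by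
    intro r hr
    have h1 := ((hu r hr).pow 2).const_mul (3:ℝ)
    have h2 := ((hu' r hr).pow 2).const_mul (4:ℝ)
    have h3 := ((Real.hasDerivAt_rpow_const (p := (2:ℝ)/3)
      (Or.inl (hpos r hr).ne')).comp_hasDerivWithinAt r (hu r hr)).const_mul (9:ℝ)
    have H := (h1.add h2).sub h3
    refine H.congr_deriv (Eq.symm ?_)
    rw [hode r hr, show (2:ℝ)/3 - 1 = -(1:ℝ)/3 by norm_num]
    push_cast
    ring
  have hEc := const_of_Ici_aux hEd
  have hE : ∀ r ∈ Set.Ici (0:ℝ),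
      4 * (u' r) ^ 2 = 9 * (u r) ^ ((2:ℝ)/3) - 3 * (u r) ^ 2 := by
    intro r hr
    have h := hEc r hr
    simp only [hEdef] at h
    linarith
  -- g = u^{2/3} satisfies g'' = -g/3
  set g : ℝ → ℝ := fun r => (u r) ^ ((2:ℝ)/3) with hgdef
  set g1 : ℝ → ℝ := fun r => 2/3 * ((u r) ^ (-(1:ℝ)/3) * u' r) with hg1def
  have hg1 : ∀ r ∈ Set.Ici (0:ℝ), HasDerivWithinAt g (g1 r) (Set.Ici 0) r := by
    intro r hr
    have h := (Real.hasDerivAt_rpow_const (p := (2:ℝ)/3)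
      (Or.inl (hpos r hr).ne')).comp_hasDerivWithinAt r (hu r hr)
    refine h.congr_deriv (Eq.symm ?_)
    rw [show (2:ℝ)/3 - 1 = -(1:ℝ)/3 by norm_num, hg1def]
    ring
  have hg2 : ∀ r ∈ Set.Ici (0:ℝ),
      HasDerivWithinAt g1 (-(1/3) * g r) (Set.Ici 0) r := by
    intro r hr
    have hA := (Real.hasDerivAt_rpow_const (p := -(1:ℝ)/3)
      (Or.inl (hpos r hr).ne')).comp_hasDerivWithinAt r (hu r hr)
    have h := (hA.mul (hu' r hr)).const_mul (2/3 : ℝ)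
    refine h.congr_deriv (Eq.symm ?_)
    exact (key_alg (u r) (u' r) (u'' r) (hpos r hr) (hode r hr) (hE r hr)).symm
  -- Wronskian with sin(r/√3)
  set k : ℝ := (Real.sqrt 3)⁻¹ with hkdef
  have hk0 : 0 < k := inv_pos.2 (Real.sqrt_pos.2 (by norm_num))
  have hk : k ^ 2 = 1/3 := by
    rw [hkdef, inv_pow, Real.sq_sqrt (by norm_num : (0:ℝ) ≤ 3)]
    norm_num
  have hsin : ∀ r : ℝ, HasDerivAt (fun x => Real.sin (k * x)) (k * Real.cos (k * r)) r := by
    intro r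
    have h : HasDerivAt (fun x => Real.sin (k * x)) (Real.cos (k * r) * (k * 1)) r :=
      (Real.hasDerivAt_sin (k * r)).comp r ((hasDerivAt_id r).const_mul k)
    convert h using 1
    ring
  have hcos : ∀ r : ℝ, HasDerivAt (fun x => Real.cos (k * x)) (-(k * Real.sin (k * r))) r := by
    intro r
    have h : HasDerivAt (fun x => Real.cos (k * x)) (-Real.sin (k * r) * (k * 1)) r :=
      (Real.hasDerivAt_cos (k * r)).comp r ((hasDerivAt_id r).const_mul k)
    convert h using 1
    ring
  set W : ℝ → ℝ := fun r => g1 r * Real.sin (k * r) - k * (g r * Real.cos (k * r)) with hWdef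
  have hWd : ∀ r ∈ Set.Ici (0:ℝ), HasDerivWithinAt W 0 (Set.Ici 0) r := by
    intro r hr
    have h1 := (hg2 r hr).mul ((hsin r).hasDerivWithinAt)
    have h2 := ((hg1 r hr).mul ((hcos r).hasDerivWithinAt)).const_mul k
    have H := h1.sub h2
    refine H.congr_deriv (Eq.symm ?_)
    have hkk : k * k = 1/3 := by nlinarith [hk]
    linear_combination (-(g r * Real.sin (k * r))) * hkk
  have hWc := const_of_Ici_aux hWd
  set T : ℝ := Real.pi * Real.sqrt 3 with hTdef
  have hs3 : Real.sqrt 3 ≠ 0 := by positivity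
  have hT0 : (0:ℝ) ≤ T := by positivity
  have hkT : k * T = Real.pi := by
    rw [hkdef, hTdef]; field_simp
  have hWT : W T = k * g T := by
    have h1 : Real.sin (k * T) = 0 := by rw [hkT]; exact Real.sin_pi
    have h2 : Real.cos (k * T) = -1 := by rw [hkT]; exact Real.cos_pi
    simp only [hWdef, h1, h2]; ring
  have hW0 : W 0 = -(k * g 0) := by
    simp only [hWdef, mul_zero, Real.sin_zero, Real.cos_zero]; ring
  have hgT : 0 < g T := Real.rpow_pos_of_pos (hpos T hT0) _
  have hg0 : 0 < g 0 := Real.rpow_pos_of_pos (hpos 0 Set.self_mem_Ici) _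
  have := hWc T hT0
  rw [hWT, hW0] at this
  nlinarith [mul_pos hk0 hgT, mul_pos hk0 hg0]
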